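/- If the misspecified position bias curve q agrees with the true curve p on all positions within distance T of the target rank of every item (i.e., q_k = p_k for all k with |k − rank(y|Y)| ≤ T, for every y), then the INTERPOL estimator with window size T built from q is unbiased under the position-based model with curve p. -/

import Mathlib

/-- If the misspecified position bias curve `q` agrees with the true
curve `p` on all positions within distance `T` of the target rank of every item,
then the INTERPOL estimator with window size `T` built from `q` is unbiased under
the position-based model with curve `p`. -/
theorem interpol_locally_correct_curve_unbiased
    (K : ℕ) (A : Type*) [Fintype A] [DecidableEq A]
    (p q : Fin K → ℝ) (hp0 : ∀ k, 0 < p k) (hp1 : ∀ k, p k ≤ 1)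
    (hq0 : ∀ k, 0 < q k) (hq1 : ∀ k, q k ≤ 1)
    (rel : A → ℝ) (hrel0 : ∀ y, 0 ≤ rel y) (hrel1 : ∀ y, rel y ≤ 1)
    (π₀ : (A ≃ Fin K) → ℝ) (hπ₀ : ∀ Y₀, 0 ≤ π₀ Y₀)
    (hπ₀sum : ∑ Y₀ : A ≃ Fin K, π₀ Y₀ = 1)
    (Y : A ≃ Fin K) (T : ℕ)
    (Pwin : A → ℝ)
    (hPwin : ∀ y, Pwin y = ∑ Y₀ : A ≃ Fin K, π₀ Y₀ *
      (if |((Y₀ y : ℕ) : ℤ) - ((Y y : ℕ) : ℤ)| ≤ (T : ℤ) then (1 : ℝ) else 0))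
    (hfull : ∀ y, 0 < Pwin y)
    (hlocal : ∀ (y : A) (k : Fin K),
      |((k : ℕ) : ℤ) - ((Y y : ℕ) : ℤ)| ≤ (T : ℤ) → q k = p k) :
    ∑ Y₀ : A ≃ Fin K, π₀ Y₀ * ∑ y : A,
        (((if |((Y₀ y : ℕ) : ℤ) - ((Y y : ℕ) : ℤ)| ≤ (T : ℤ) then (1 : ℝ) else 0) /
            Pwin y) * (q (Y y) / q (Y₀ y))) * (rel y * p (Y₀ y)) =
    ∑ y : A, rel y * p (Y y) := by
  have key : ∀ y : A,
      ∑ Y₀ : A ≃ Fin K, π₀ Y₀ *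
        ((((if |((Y₀ y : ℕ) : ℤ) - ((Y y : ℕ) : ℤ)| ≤ (T : ℤ) then (1 : ℝ) else 0) /
            Pwin y) * (q (Y y) / q (Y₀ y))) * (rel y * p (Y₀ y))) =
      rel y * p (Y y) := by
    intro y
    have h1 : ∀ Y₀ : A ≃ Fin K, π₀ Y₀ *
        ((((if |((Y₀ y : ℕ) : ℤ) - ((Y y : ℕ) : ℤ)| ≤ (T : ℤ) then (1 : ℝ) else 0) /
            Pwin y) * (q (Y y) / q (Y₀ y))) * (rel y * p (Y₀ y))) =
        (π₀ Y₀ * (if |((Y₀ y : ℕ) : ℤ) - ((Y y : ℕ) : ℤ)| ≤ (T : ℤ) then (1 : ℝ) else 0))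
          * (rel y * p (Y y) / Pwin y) := by
      intro Y₀
      by_cases h : |((Y₀ y : ℕ) : ℤ) - ((Y y : ℕ) : ℤ)| ≤ (T : ℤ)
      · rw [if_pos h, hlocal y (Y₀ y) h, hlocal y (Y y) (by simp)]
        have hpne : p (Y₀ y) ≠ 0 := (hp0 _).ne'
        field_simp
      · rw [if_neg h]; ring
    rw [Finset.sum_congr rfl (fun Y₀ _ => h1 Y₀), ← Finset.sum_mul, ← hPwin y,
      mul_div_assoc]
    field_simp [(hfull y).ne']
  calc ∑ Y₀ : A ≃ Fin K, π₀ Y₀ * ∑ y : A,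
        (((if |((Y₀ y : ℕ) : ℤ) - ((Y y : ℕ) : ℤ)| ≤ (T : ℤ) then (1 : ℝ) else 0) /
            Pwin y) * (q (Y y) / q (Y₀ y))) * (rel y * p (Y₀ y))
      = ∑ Y₀ : A ≃ Fin K, ∑ y : A, π₀ Y₀ *
        ((((if |((Y₀ y : ℕ) : ℤ) - ((Y y : ℕ) : ℤ)| ≤ (T : ℤ) then (1 : ℝ) else 0) /
            Pwin y) * (q (Y y) / q (Y₀ y))) * (rel y * p (Y₀ y))) := by
        simp [Finset.mul_sum]
    _ = ∑ y : A, ∑ Y₀ : A ≃ Fin K, π₀ Y₀ *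
        ((((if |((Y₀ y : ℕ) : ℤ) - ((Y y : ℕ) : ℤ)| ≤ (T : ℤ) then (1 : ℝ) else 0) /
            Pwin y) * (q (Y y) / q (Y₀ y))) * (rel y * p (Y₀ y))) := Finset.sum_comm
    _ = ∑ y : A, rel y * p (Y y) := Finset.sum_congr rfl (fun y _ => key y)
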